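/- Let C be a closed subset of ℝ^N, ε ∈ ℝ^N an arbitrary vector, θ* ∈ C, and θ̂ a minimizer over C of ‖θ* + ε − θ‖₂². Define f(t) = sup{⟨ε, θ − θ*⟩ : θ ∈ C, ‖θ − θ*‖₂ ≤ t} − t²/2. If there exists t* > 0 such that f(t) < 0 for all t ≥ t*, then ‖θ̂ − θ*‖₂ ≤ t*. -/
import Mathlib


open scoped RealInnerProductSpace

/-- Chatterjee's variational formula for least squares over a closed set: if
`f(t) = sup{⟨ε, θ − θ*⟩ : θ ∈ C, ‖θ − θ*‖ ≤ t} − t²/2` is negative for all `t ≥ t*`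
with `t* > 0`, then the least squares estimator satisfies `‖θ̂ − θ*‖ ≤ t*`. -/
theorem variational_bound_least_squares
    {N : ℕ} (C : Set (EuclideanSpace ℝ (Fin N))) (hC : IsClosed C)
    (ε θstar : EuclideanSpace ℝ (Fin N)) (hθstar : θstar ∈ C)
    (θhat : EuclideanSpace ℝ (Fin N)) (hθhat : θhat ∈ C)
    (hmin : ∀ θ ∈ C, ‖θstar + ε - θhat‖ ≤ ‖θstar + ε - θ‖)
    (tstar : ℝ) (htstar : 0 < tstar)
    (hf : ∀ t : ℝ, tstar ≤ t →
      (⨆ θ ∈ {θ ∈ C | ‖θ - θstar‖ ≤ t}, ⟪ε, θ - θstar⟫) - t ^ 2 / 2 < 0) :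
    ‖θhat - θstar‖ ≤ tstar := by
  by_contra h
  push_neg at h
  set t : ℝ := ‖θhat - θstar‖ with ht
  have ht0 : (0:ℝ) ≤ t := norm_nonneg _
  -- Step 1: basic inequality t^2/2 ≤ ⟪ε, θhat - θstar⟫
  have h1 : ‖θstar + ε - θhat‖ ≤ ‖ε‖ := by
    have := hmin θstar hθstar
    simpa using this
  have hkey : t ^ 2 / 2 ≤ ⟪ε, θhat - θstar⟫ := by
    have hsq : ‖θstar + ε - θhat‖ ^ 2 ≤ ‖ε‖ ^ 2 := by
      exact pow_le_pow_left₀ (norm_nonneg _) h1 2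
    have hrw : θstar + ε - θhat = ε - (θhat - θstar) := by abel
    rw [hrw, norm_sub_sq_real] at hsq
    nlinarith [hsq]
  -- Step 2: θhat belongs to the set
  have hmem : θhat ∈ {θ ∈ C | ‖θ - θstar‖ ≤ t} := ⟨hθhat, le_refl _⟩
  -- Step 3: bounded above
  have hb : BddAbove (Set.range fun θ : EuclideanSpace ℝ (Fin N) =>
      ⨆ _ : θ ∈ {θ ∈ C | ‖θ - θstar‖ ≤ t}, ⟪ε, θ - θstar⟫) := by
    refine ⟨‖ε‖ * t, ?_⟩
    rintro x ⟨θ, rfl⟩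
    refine Real.iSup_le (fun hθ => ?_) (by positivity)
    calc ⟪ε, θ - θstar⟫ ≤ ‖ε‖ * ‖θ - θstar‖ := real_inner_le_norm _ _
      _ ≤ ‖ε‖ * t := by
          exact mul_le_mul_of_nonneg_left hθ.2 (norm_nonneg _)
  have hle : t ^ 2 / 2 ≤ ⨆ θ ∈ {θ ∈ C | ‖θ - θstar‖ ≤ t}, ⟪ε, θ - θstar⟫ := by
    refine le_trans hkey ?_
    have := le_ciSup hb θhat
    rwa [ciSup_pos hmem] at this
  have := hf t (le_of_lt h)
  linarith
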